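/- Let 𝒞 be a finite set of closed intervals on ℝ and k ≥ 0 an integer. Define r_opt = min over all sets S ⊂ ℝ of size k of max_{C ∈ 𝒞} dist(C, S). Then either r_opt = 0, or r_opt = dist(C, C')/2 for some pair of intervals C, C' ∈ 𝒞. -/
import Mathlib


open Metric

lemma aux_infDist_Icc_le_iff (a b s r : ℝ) (hab : a ≤ b) (hr : 0 ≤ r) :
    infDist s (Set.Icc a b) ≤ r ↔ a - r ≤ s ∧ s ≤ b + r := by
  constructor
  · intro h
    obtain ⟨y, hy, hdy⟩ := isCompact_Icc.exists_infDist_eq_dist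
      (Set.nonempty_Icc.2 hab) s
    rw [hdy, Real.dist_eq, abs_le] at h
    obtain ⟨hy1, hy2⟩ := hy
    constructor <;> linarith
  · rintro ⟨h1, h2⟩
    set y := max a (min s b) with hy
    have hymem : y ∈ Set.Icc a b := by
      constructor
      · exact le_max_left _ _
      · exact max_le hab (min_le_right _ _)
    refine le_trans (infDist_le_dist_of_mem hymem) ?_
    rw [Real.dist_eq, abs_le]
    rcases le_total s b with hsb | hsb
    · rcases le_total a s with has | has
      · rw [hy, min_eq_left hsb, max_eq_right has]; constructor <;> linarith
      · rw [hy, min_eq_left hsb, max_eq_left has]; constructor <;> linarith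
    · rw [hy, min_eq_right hsb, max_eq_right hab]; constructor <;> linarith

theorem stmt_14
    (𝒞 : Finset (ℝ × ℝ)) (h𝒞 : 𝒞.Nonempty) (hval : ∀ I ∈ 𝒞, I.1 ≤ I.2)
    (k : ℕ) (hk : 1 ≤ k)
    (ropt : ℝ)
    (hopt : IsLeast {x : ℝ | ∃ S : Finset ℝ, S.card = k ∧
      ∀ I ∈ 𝒞, ∃ s ∈ S, infDist s (Set.Icc I.1 I.2) ≤ x} ropt) :
    ropt = 0 ∨ ∃ I ∈ 𝒞, ∃ J ∈ 𝒞,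
      ropt = max (J.1 - I.2) (max (I.1 - J.2) 0) / 2 := by
  classical
  obtain ⟨⟨S, hScard, hS⟩, hlb⟩ := hopt
  -- ropt ≥ 0
  obtain ⟨I₀, hI₀⟩ := h𝒞
  have hropt0 : 0 ≤ ropt := by
    obtain ⟨s, _, hs⟩ := hS I₀ hI₀
    exact le_trans infDist_nonneg hs
  -- assignment function
  have H : ∀ I : {x // x ∈ 𝒞}, ∃ s ∈ S, infDist s (Set.Icc I.1.1 I.1.2) ≤ ropt := by
    rintro ⟨I, hI⟩; exact hS I hI
  choose f hfS hf using H
  set g : ℝ × ℝ → ℝ := fun I => if h : I ∈ 𝒞 then f ⟨I, h⟩ else 0 with hg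
  have hgS : ∀ I (hI : I ∈ 𝒞), g I ∈ S := by
    intro I hI; rw [hg]; simp only [dif_pos hI]; exact hfS ⟨I, hI⟩
  have hgf : ∀ I (hI : I ∈ 𝒞), infDist (g I) (Set.Icc I.1 I.2) ≤ ropt := by
    intro I hI; rw [hg]; simp only [dif_pos hI]; exact hf ⟨I, hI⟩
  -- the distance function
  set d : ℝ × ℝ → ℝ × ℝ → ℝ := fun I J => max (J.1 - I.2) (max (I.1 - J.2) 0) with hd
  set P : Finset ((ℝ × ℝ) × (ℝ × ℝ)) :=
    (𝒞 ×ˢ 𝒞).filter (fun p => g p.1 = g p.2) with hP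
  have hPne : P.Nonempty := ⟨(I₀, I₀), by simp [hP, hI₀]⟩
  set r' : ℝ := P.sup' hPne (fun p => d p.1 p.2) / 2 with hr'
  have hdnn : ∀ p ∈ P, 0 ≤ d p.1 p.2 := by
    intro p _; exact le_sup_of_le_right le_sup_right
  have hr'nn : 0 ≤ r' := by
    rw [hr']
    have := Finset.le_sup' (fun p => d p.1 p.2) hPne.choose_spec
    have h0 := hdnn _ hPne.choose_spec
    linarith
  -- key: pairs in same cluster have d ≤ 2 r'
  have hpair : ∀ I ∈ 𝒞, ∀ J ∈ 𝒞, g I = g J → d I J ≤ 2 * r' := by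
    intro I hI J hJ hgIJ
    have hmem : (I, J) ∈ P := by simp [hP, hI, hJ, hgIJ]
    have := Finset.le_sup' (fun p => d p.1 p.2) hmem
    rw [hr']; linarith
  -- r' is feasible
  have hr'feas : r' ∈ {x : ℝ | ∃ S : Finset ℝ, S.card = k ∧
      ∀ I ∈ 𝒞, ∃ s ∈ S, infDist s (Set.Icc I.1 I.2) ≤ x} := by
    set cl : ℝ → Finset (ℝ × ℝ) := fun s => 𝒞.filter (fun I => g I = s) with hcl
    set t : ℝ → ℝ := fun s =>
      if h : (cl s).Nonempty then ((cl s).image Prod.fst).max' (h.image _) - r' else s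
      with ht
    obtain ⟨S', hTS', hS'card⟩ :=
      Infinite.exists_superset_card_eq (S.image t) k (le_trans Finset.card_image_le hScard.le)
    refine ⟨S', hS'card, ?_⟩
    intro I hI
    have hclne : (cl (g I)).Nonempty := ⟨I, by simp [hcl, hI]⟩
    refine ⟨t (g I), hTS' (Finset.mem_image_of_mem t (hgS I hI)), ?_⟩
    rw [aux_infDist_Icc_le_iff _ _ _ _ (hval I hI) hr'nn]
    rw [ht]; simp only [dif_pos hclne]
    obtain ⟨J, hJmem, hJeq⟩ := Finset.mem_image.1
      (((cl (g I)).image Prod.fst).max'_mem (hclne.image _))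
    rw [hcl] at hJmem; rw [Finset.mem_filter] at hJmem
    obtain ⟨hJ𝒞, hJg⟩ := hJmem
    constructor
    · have hle : I.1 ≤ ((cl (g I)).image Prod.fst).max' (hclne.image _) :=
        Finset.le_max' _ _ (Finset.mem_image_of_mem _ (by simp [hcl, hI]))
      linarith
    · have hdle : d I J ≤ 2 * r' := hpair I hI J hJ𝒞 hJg.symm
      have : J.1 - I.2 ≤ d I J := le_max_left _ _
      rw [← hJeq]; linarith
  have h1 : ropt ≤ r' := hlb hr'feas
  -- r' ≤ ropt : sup' attained
  obtain ⟨p, hpP, hpsup⟩ := Finset.exists_mem_eq_sup' hPne (fun p => d p.1 p.2)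
  rw [hP, Finset.mem_filter, Finset.mem_product] at hpP
  obtain ⟨⟨hp1, hp2⟩, hpg⟩ := hpP
  have hcov1 := (aux_infDist_Icc_le_iff _ _ _ _ (hval _ hp1) hropt0).1 (hgf _ hp1)
  have hcov2 := (aux_infDist_Icc_le_iff _ _ _ _ (hval _ hp2) hropt0).1 (hgf _ hp2)
  rw [hpg] at hcov1
  have hdub : d p.1 p.2 ≤ 2 * ropt := by
    rw [hd]
    refine max_le (by linarith [hcov1.1, hcov2.2]) (max_le (by linarith [hcov1.2, hcov2.1]) (by linarith))
  have h2 : r' ≤ ropt := by rw [hr', hpsup]; linarith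
  right
  refine ⟨p.1, hp1, p.2, hp2, ?_⟩
  have : ropt = r' := le_antisymm h1 h2
  rw [this, hr', hpsup]
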